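/- An involution y in S_n is 132-avoiding (dominant) if and only if y is weakly dominant with r(y) dominant; in particular, every dominant involution has the form (1,b_1)(2,b_2)⋯(k,b_k) with all b_i > k. -/

import Mathlib

/-- `y` is weakly dominant with parameter `k` (0-indexed): `y` is the product of
transpositions `(0,b_0)(1,b_1)⋯(k-1,b_{k-1})` with all `b_i ≥ k`, i.e. each
`i < k` is mapped to a value `≥ k`, and each point `≥ k` is either fixed or
mapped into `[k]`. -/
def WeaklyDominantWith {n : ℕ} (y : Equiv.Perm (Fin n)) (k : ℕ) : Prop :=
  k ≤ n ∧ (∀ i : Fin n, i.1 < k → k ≤ (y i).1) ∧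
    (∀ i : Fin n, k ≤ i.1 → (y i = i ∨ (y i).1 < k))

/-- The first `k` entries (0-indexed values) of the one-line notation of `r(y)`:
the values `y(i) − k` for `i < k`. -/
def topsList (n : ℕ) (y : Equiv.Perm (Fin n)) (k : ℕ) : List ℕ :=
  ((List.finRange n).filter (fun i => decide (i.1 < k))).map (fun i => (y i).1 - k)

/-- The one-line notation of `r(y)` for a weakly dominant involution `y` with
parameter `k`: the values `y(i) − k` for `i < k`, followed by the remaining
values of `[n−k]` in increasing order. -/
def oneLineR (n : ℕ) (y : Equiv.Perm (Fin n)) (k : ℕ) : List ℕ :=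
  topsList n y k ++ (List.range (n - k)).filter (fun m => decide (m ∉ topsList n y k))

/-- `w` avoids the pattern 132: no `i < j < k` with `w(i) < w(k) < w(j)`. -/
def Avoids132 {n : ℕ} (w : Equiv.Perm (Fin n)) : Prop :=
  ¬ ∃ i j k : Fin n, i < j ∧ j < k ∧ w i < w k ∧ w k < w j

/-- A list (one-line notation) avoids the pattern 132. -/
def ListAvoids132 (L : List ℕ) : Prop :=
  ¬ ∃ i j l : ℕ, i < j ∧ j < l ∧ l < L.length ∧
    L.getD i 0 < L.getD l 0 ∧ L.getD l 0 < L.getD j 0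

lemma aux_filter_range (n k : ℕ) (h : k ≤ n) :
    (List.range n).filter (fun m => decide (m < k)) = List.range k := by
  obtain ⟨d, rfl⟩ := Nat.exists_eq_add_of_le h
  rw [List.range_add, List.filter_append, List.filter_eq_self.2, List.filter_eq_nil_iff.2,
    List.append_nil]
  · intro a ha
    simp only [List.mem_map, List.mem_range] at ha
    obtain ⟨b, hb, rfl⟩ := ha
    simp
  · intro a ha
    simp only [List.mem_range] at ha
    simp [ha]

lemma aux_finRange_filter (n k : ℕ) (h : k ≤ n) :
    (List.finRange n).filter (fun i => decide (i.1 < k)) =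
      (List.range k).pmap (fun a ha => (⟨a, ha⟩ : Fin n))
        (fun a ha => (List.mem_range.mp ha).trans_le h) := by
  apply List.map_injective_iff.mpr Fin.val_injective
  rw [List.map_pmap]
  have h2 : List.pmap (fun (a : ℕ) (h : a < n) => (⟨a, h⟩ : Fin n).val) (List.range k)
      (fun a ha => (List.mem_range.mp ha).trans_le h) = List.range k := by
    rw [List.pmap_eq_map]; exact List.map_id _
  rw [h2, ← aux_filter_range n k h, ← List.map_coe_finRange_eq_range, List.filter_map]
  rfl

lemma tops_eq (n : ℕ) (y : Equiv.Perm (Fin n)) (k : ℕ) (h : k ≤ n) :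
    topsList n y k = (List.range k).pmap (fun a ha => ((y ⟨a, ha⟩).1 - k))
      (fun a ha => (List.mem_range.mp ha).trans_le h) := by
  rw [topsList, aux_finRange_filter n k h, List.map_pmap]

lemma tops_length (n : ℕ) (y : Equiv.Perm (Fin n)) (k : ℕ) (h : k ≤ n) :
    (topsList n y k).length = k := by
  rw [tops_eq n y k h, List.length_pmap, List.length_range]

lemma tops_getD (n : ℕ) (y : Equiv.Perm (Fin n)) (k : ℕ) (h : k ≤ n) (j : ℕ) (hj : j < k) :
    (topsList n y k).getD j 0 = (y ⟨j, hj.trans_le h⟩).1 - k := by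
  rw [tops_eq n y k h, List.getD_eq_getElem _ _ (by simpa using hj), List.getElem_pmap]
  simp

lemma mem_tops (n : ℕ) (y : Equiv.Perm (Fin n)) (k : ℕ) (v : ℕ) :
    v ∈ topsList n y k ↔ ∃ i : Fin n, i.1 < k ∧ (y i).1 - k = v := by
  simp [topsList]

section Main
variable {n : ℕ} (y : Equiv.Perm (Fin n)) (k : ℕ)

lemma hinv_of (hy : y * y = 1) : ∀ i, y (y i) = i := by
  intro i
  have := congrArg (fun z => z i) hy
  simpa [Equiv.Perm.mul_apply] using this

/-- Fixed point characterization. -/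
lemma hfix_of (hy : y * y = 1) (hW : WeaklyDominantWith y k) (v : ℕ) (hv : v < n - k) :
    v ∈ topsList n y k ↔ y ⟨v + k, by omega⟩ ≠ ⟨v + k, by omega⟩ := by
  obtain ⟨hkn, h1, h2⟩ := hW
  have hinv := hinv_of y hy
  constructor
  · intro hvm
    rw [mem_tops] at hvm
    obtain ⟨i, hik, hiv⟩ := hvm
    have hb := h1 i hik
    have hyi : y i = ⟨v + k, by omega⟩ := Fin.ext (by simp only [Fin.val_mk]; omega)
    intro heq
    have h3 : y (y i) = i := hinv i
    rw [hyi, heq] at h3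
    have : v + k = i.1 := congrArg Fin.val h3
    omega
  · intro hne
    rcases h2 ⟨v + k, by omega⟩ (by simp) with h | h
    · exact absurd h hne
    · refine (mem_tops n y k v).mpr ⟨y ⟨v + k, by omega⟩, h, ?_⟩
      rw [hinv]
      simp

lemma lemA (hy : y * y = 1) (hW : WeaklyDominantWith y k) (hA : Avoids132 y) :
    ListAvoids132 (oneLineR n y k) := by
  obtain ⟨hkn, h1, h2⟩ := hW
  obtain ⟨T, hT⟩ : ∃ T, (List.range (n - k)).filter (fun m => decide (m ∉ topsList n y k)) = T :=
    ⟨_, rfl⟩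
  have hTsort : ∀ p q (hp : p < T.length) (hq : q < T.length), p < q → T[p] < T[q] := by
    intro p q hp hq hpq
    exact List.pairwise_iff_getElem.mp (hT ▸ List.pairwise_lt_range.filter _) p q hp hq hpq
  have hLlen : (oneLineR n y k).length = k + T.length := by
    rw [oneLineR, List.length_append, tops_length n y k hkn, hT]
  have hgetlo : ∀ j (hj : j < k),
      (oneLineR n y k).getD j 0 = (y ⟨j, hj.trans_le hkn⟩).1 - k := by
    intro j hj
    rw [oneLineR, List.getD_append _ _ _ _ (by rw [tops_length n y k hkn]; exact hj),
      tops_getD n y k hkn j hj]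
  have hgethi : ∀ p (hp : p < T.length), (oneLineR n y k).getD (k + p) 0 = T[p] := by
    intro p hp
    rw [oneLineR, hT, List.getD_append_right _ _ _ _ (by rw [tops_length n y k hkn]; omega),
      tops_length n y k hkn, Nat.add_sub_cancel_left, List.getD_eq_getElem]
  rintro ⟨i, j, l, hij, hjl, hlen, hv1, hv2⟩
  rw [hLlen] at hlen
  -- j < k
  have hjk : j < k := by
    by_contra hjk
    push_neg at hjk
    have hlk : k ≤ l := by omega
    have hpj : j - k < T.length := by omega
    have hpl : l - k < T.length := by omega
    have e1 : (oneLineR n y k).getD j 0 = T[j - k] := by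
      have := hgethi (j - k) hpj; rwa [Nat.add_sub_cancel' hjk] at this
    have e2 : (oneLineR n y k).getD l 0 = T[l - k] := by
      have := hgethi (l - k) hpl; rwa [Nat.add_sub_cancel' hlk] at this
    have := hTsort (j - k) (l - k) hpj hpl (by omega)
    omega
  have hik : i < k := by omega
  have hbi := h1 ⟨i, hik.trans_le hkn⟩ hik
  have hbj := h1 ⟨j, hjk.trans_le hkn⟩ hjk
  rw [hgetlo i hik] at hv1
  rw [hgetlo j hjk] at hv2
  by_cases hlk : l < k
  · -- all in the top part
    have hbl := h1 ⟨l, by omega⟩ hlk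
    rw [hgetlo l hlk] at hv1 hv2
    exact hA ⟨⟨i, by omega⟩, ⟨j, by omega⟩, ⟨l, by omega⟩, by simp [Fin.lt_def]; omega,
      by simp [Fin.lt_def]; omega, by rw [Fin.lt_def]; omega, by rw [Fin.lt_def]; omega⟩
  · push_neg at hlk
    have hp : l - k < T.length := by omega
    obtain ⟨v, hv⟩ : ∃ v, T[l - k] = v := ⟨_, rfl⟩
    have e2 : (oneLineR n y k).getD l 0 = v := by
      have := hgethi (l - k) hp; rw [Nat.add_sub_cancel' hlk] at this; rw [this, hv]
    rw [e2] at hv1 hv2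
    have hvT : v ∈ T := hv ▸ List.getElem_mem hp
    rw [← hT, List.mem_filter, List.mem_range] at hvT
    obtain ⟨hvn, hvnt⟩ := hvT
    have hvnt' : v ∉ topsList n y k := by simpa using hvnt
    have hvkn : v + k < n := by omega
    have hfixv : y ⟨v + k, hvkn⟩ = ⟨v + k, hvkn⟩ := by
      by_contra hne
      refine hvnt' ((hfix_of y k hy ⟨hkn, h1, h2⟩ v hvn).mpr ?_)
      convert hne using 3
    have hfixv' : (y ⟨v + k, hvkn⟩).1 = v + k := by rw [hfixv]
    refine hA ⟨⟨i, hik.trans_le hkn⟩, ⟨j, hjk.trans_le hkn⟩, ⟨v + k, hvkn⟩,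
      by simp [Fin.lt_def]; omega, by simp [Fin.lt_def]; omega, ?_, ?_⟩
    · rw [Fin.lt_def]; omega
    · rw [Fin.lt_def]; omega

end Main

section Main2
variable {n : ℕ} (y : Equiv.Perm (Fin n)) (k : ℕ)

lemma lemB (hy : y * y = 1) (hW : WeaklyDominantWith y k) (hL : ListAvoids132 (oneLineR n y k)) :
    Avoids132 y := by
  obtain ⟨hkn, h1, h2⟩ := hW
  have hinv := hinv_of y hy
  obtain ⟨T, hT⟩ : ∃ T, (List.range (n - k)).filter (fun m => decide (m ∉ topsList n y k)) = T :=
    ⟨_, rfl⟩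
  have hLlen : (oneLineR n y k).length = k + T.length := by
    rw [oneLineR, List.length_append, tops_length n y k hkn, hT]
  have hgetlo : ∀ j (hj : j < k),
      (oneLineR n y k).getD j 0 = (y ⟨j, hj.trans_le hkn⟩).1 - k := by
    intro j hj
    rw [oneLineR, List.getD_append _ _ _ _ (by rw [tops_length n y k hkn]; exact hj),
      tops_getD n y k hkn j hj]
  have hgethi : ∀ p (hp : p < T.length), (oneLineR n y k).getD (k + p) 0 = T[p] := by
    intro p hp
    rw [oneLineR, hT, List.getD_append_right _ _ _ _ (by rw [tops_length n y k hkn]; omega),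
      tops_length n y k hkn, Nat.add_sub_cancel_left, List.getD_eq_getElem]
  have htail : ∀ w : Fin n, k ≤ w.1 → y w = w →
      ∃ p, p < T.length ∧ (oneLineR n y k).getD (k + p) 0 = w.1 - k := by
    intro w hw hfw
    have hvmem : w.1 - k ∈ T := by
      rw [← hT, List.mem_filter, List.mem_range]
      refine ⟨by omega, ?_⟩
      simp only [decide_not, Bool.not_eq_true', decide_eq_false_iff_not]
      intro hmem
      have hwn : w.1 - k < n - k := by omega
      have := (hfix_of y k hy ⟨hkn, h1, h2⟩ (w.1 - k) hwn).mp hmem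
      apply this
      have hwe : (⟨w.1 - k + k, by omega⟩ : Fin n) = w := Fin.ext (by simp; omega)
      rw [hwe, hfw]
    refine ⟨T.idxOf (w.1 - k), List.idxOf_lt_length_iff.mpr hvmem, ?_⟩
    rw [hgethi _ (List.idxOf_lt_length_iff.mpr hvmem), List.getElem_idxOf]
  rintro ⟨i, j, l, hij, hjl, hv1, hv2⟩
  rw [Fin.lt_def] at hij hjl hv1 hv2
  rcases Nat.lt_or_ge l.1 k with hlk | hlk
  · -- all three positions < k
    have hik : i.1 < k := by omega
    have hjk : j.1 < k := by omega
    have hbi := h1 i hik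
    have hbj := h1 j hjk
    have hbl := h1 l hlk
    refine hL ⟨i.1, j.1, l.1, hij, hjl, by omega, ?_, ?_⟩
    · rw [hgetlo i.1 hik, hgetlo l.1 hlk]; simp only [Fin.eta]; omega
    · rw [hgetlo j.1 hjk, hgetlo l.1 hlk]; simp only [Fin.eta]; omega
  · rcases Nat.lt_or_ge j.1 k with hjk | hjk
    · -- i < j < k ≤ l : l must be fixed
      have hik : i.1 < k := by omega
      have hbi := h1 i hik
      have hbj := h1 j hjk
      have hyl : y l = l := by
        rcases h2 l hlk with h | h
        · exact h
        · omega
      have hv1' : (y i).1 < l.1 := by rw [hyl] at hv1; exact hv1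
      have hv2' : l.1 < (y j).1 := by rw [hyl] at hv2; exact hv2
      obtain ⟨p, hp, hpe⟩ := htail l hlk hyl
      refine hL ⟨i.1, j.1, k + p, hij, by omega, by omega, ?_, ?_⟩
      · rw [hgetlo i.1 hik, hpe]; simp only [Fin.eta]; omega
      · rw [hgetlo j.1 hjk, hpe]; simp only [Fin.eta]; omega
    · rcases Nat.lt_or_ge i.1 k with hik | hik
      · -- i < k ≤ j : impossible
        exfalso
        have hbi := h1 i hik
        have hyl : y l = l := by
          rcases h2 l (by omega) with h | h
          · exact h
          · omega
        have hv2' : l.1 < (y j).1 := by rw [hyl] at hv2; exact hv2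
        rcases h2 j hjk with h | h
        · rw [h] at hv2'; omega
        · rw [hyl] at hv1; omega
      · -- k ≤ i < j < l
        have hyl_lt : (y l).1 < k := by
          rcases h2 l (by omega) with h | h
          · exfalso
            have hv2' : l.1 < (y j).1 := by rw [h] at hv2; exact hv2
            rcases h2 j hjk with h' | h'
            · rw [h'] at hv2'; omega
            · omega
          · exact h
        have hyi_lt : (y i).1 < k := by omega
        have egeta : (oneLineR n y k).getD (y i).1 0 = i.1 - k := by
          rw [hgetlo (y i).1 hyi_lt]; simp only [Fin.eta]; rw [hinv i]
        have egetc : (oneLineR n y k).getD (y l).1 0 = l.1 - k := by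
          rw [hgetlo (y l).1 hyl_lt]; simp only [Fin.eta]; rw [hinv l]
        rcases h2 j hjk with hfj | hbj
        · obtain ⟨p, hp, hpe⟩ := htail j hjk hfj
          refine hL ⟨(y i).1, (y l).1, k + p, hv1, by omega, by omega, ?_, ?_⟩
          · rw [egeta, hpe]; omega
          · rw [egetc, hpe]; omega
        · have egetb : (oneLineR n y k).getD (y j).1 0 = j.1 - k := by
            rw [hgetlo (y j).1 hbj]; simp only [Fin.eta]; rw [hinv j]
          refine hL ⟨(y i).1, (y l).1, (y j).1, hv1, hv2, by omega, ?_, ?_⟩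
          · rw [egeta, egetb]; omega
          · rw [egetc, egetb]; omega

end Main2

/-- An involution `y ∈ S_n` is dominant (132-avoiding) if and only if `y` is
weakly dominant and `r(y)` is dominant; in particular every dominant involution
has the form `(1,b_1)(2,b_2)⋯(k,b_k)` with all `b_i > k`. -/
theorem stmt16 {n : ℕ} (y : Equiv.Perm (Fin n)) (hy : y * y = 1) :
    Avoids132 y ↔
      ∃ k : ℕ, WeaklyDominantWith y k ∧ ListAvoids132 (oneLineR n y k) := by
  constructor
  · intro hA
    have hinv := hinv_of y hy
    rcases Nat.eq_zero_or_pos n with hn | hn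
    · subst hn
      refine ⟨0, ⟨le_refl 0, fun i _ => i.elim0, fun i _ => i.elim0⟩, ?_⟩
      rintro ⟨i, j, l, -, -, hlen, -, -⟩
      simp [oneLineR, topsList] at hlen
    · classical
      have hPex : ∃ m, ∃ h : m < n, (y ⟨m, h⟩).1 ≤ m := by
        refine ⟨n - 1, by omega, ?_⟩
        have := (y ⟨n - 1, by omega⟩).isLt
        omega
      obtain ⟨k, ⟨hkln, hkspec⟩, hmin⟩ :
          ∃ k, (∃ h : k < n, (y ⟨k, h⟩).1 ≤ k) ∧
            ∀ m, m < k → ¬∃ h : m < n, (y ⟨m, h⟩).1 ≤ m :=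
        ⟨Nat.find hPex, Nat.find_spec hPex, fun m hm => Nat.find_min hPex hm⟩
      have hkmin : ∀ m, m < k → ∀ (h : m < n), m < (y ⟨m, h⟩).1 := by
        intro m hm h
        have := hmin m hm
        push_neg at this
        exact this h
      have step1 : ∀ i : Fin n, k ≤ i.1 → (y i).1 ≤ i.1 := by
        intro i hi
        by_contra hcon
        push_neg at hcon
        rcases eq_or_lt_of_le hi with he | hlt
        · have he2 : (⟨k, hkln⟩ : Fin n) = i := Fin.ext he
          rw [he2] at hkspec
          omega
        · refine hA ⟨⟨k, hkln⟩, i, y i, ?_, ?_, ?_, ?_⟩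
          · rw [Fin.lt_def]; exact hlt
          · rw [Fin.lt_def]; exact hcon
          · rw [Fin.lt_def, hinv i]; omega
          · rw [Fin.lt_def, hinv i]; exact hcon
      have h1 : ∀ i : Fin n, i.1 < k → k ≤ (y i).1 := by
        intro i hik
        have hlt : i.1 < (y i).1 := by
          have := hkmin i.1 hik i.isLt
          simpa [Fin.eta] using this
        by_contra hcon
        push_neg at hcon
        have h3 := hkmin (y i).1 hcon (y i).isLt
        simp only [Fin.eta] at h3
        rw [hinv i] at h3
        omega
      have h2 : ∀ i : Fin n, k ≤ i.1 → y i = i ∨ (y i).1 < k := by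
        intro i hi
        rcases eq_or_lt_of_le (step1 i hi) with he | hlt
        · exact Or.inl (Fin.ext he)
        · right
          by_contra hcon
          push_neg at hcon
          have h4 := step1 (y i) hcon
          rw [hinv i] at h4
          omega
      have hkn : k ≤ n := le_of_lt hkln
      exact ⟨k, ⟨hkn, h1, h2⟩, lemA y k hy ⟨hkn, h1, h2⟩ hA⟩
  · rintro ⟨k, hW, hL⟩
    exact lemB y k hy hW hL
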